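/- If p is a nonzero homogeneous polynomial of degree d in n variables over ℂ, then there exists an n-tuple i = (i_1, ..., i_n) of nonnegative integers with i_1 + ... + i_n = d such that p(i_1, ..., i_n) ≠ 0. -/

import Mathlib

open Finset MvPolynomial Function
open scoped fwdDiff

/-- The function `i ↦ i^m` on `ℕ`, valued in `ℂ`. -/
noncomputable def bfm (m : ℕ) : ℕ → ℂ := fun i => (i : ℂ) ^ m

private lemma bfm_fwdDiff (m : ℕ) :
    fwdDiff 1 (bfm m) = ∑ l ∈ Finset.range m, (m.choose l : ℂ) • bfm l := by
  funext i
  have hbin : ((i : ℂ) + 1) ^ m = ∑ l ∈ Finset.range (m + 1), (i : ℂ) ^ l * (m.choose l : ℂ) := by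
    rw [add_pow]
    exact Finset.sum_congr rfl fun l _ => by rw [one_pow, mul_one]
  simp only [fwdDiff, bfm, Finset.sum_apply, Pi.smul_apply, smul_eq_mul]
  push_cast
  rw [hbin, Finset.sum_range_succ, Nat.choose_self]
  push_cast
  rw [mul_one, add_sub_cancel_right]
  exact Finset.sum_congr rfl fun l _ => mul_comm _ _

private lemma bfm_fwdDiff_iter_eq_zero : ∀ m : ℕ, ∀ j : ℕ, m < j → (fwdDiff 1)^[j] (bfm m) = 0 := by
  intro m
  induction m using Nat.strong_induction_on with
  | _ m IH =>
    intro j hj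
    obtain ⟨j', rfl⟩ : ∃ j', j = j' + 1 := ⟨j - 1, (Nat.succ_pred_eq_of_pos (Nat.pos_of_ne_zero (by omega))).symm⟩
    rw [Function.iterate_succ_apply, bfm_fwdDiff, fwdDiff_iter_finset_sum]
    refine Finset.sum_eq_zero fun l hl => ?_
    rw [fwdDiff_iter_const_smul, IH l (Finset.mem_range.mp hl) j'
      (lt_of_lt_of_le (Finset.mem_range.mp hl) (by omega)), smul_zero]

private lemma bfm_fwdDiff_iter_self : ∀ m : ℕ, (fwdDiff 1)^[m] (bfm m) = fun _ => (m.factorial : ℂ) := by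
  intro m
  induction m with
  | zero => funext i; simp [bfm]
  | succ m IH =>
    rw [Function.iterate_succ_apply, bfm_fwdDiff, fwdDiff_iter_finset_sum,
      Finset.sum_range_succ]
    have h0 : ∀ l ∈ Finset.range m, (fwdDiff 1)^[m] ((((m+1).choose l : ℂ)) • bfm l) = 0 := by
      intro l hl
      rw [fwdDiff_iter_const_smul, bfm_fwdDiff_iter_eq_zero l m (Finset.mem_range.mp hl),
        smul_zero]
    rw [Finset.sum_eq_zero h0, zero_add, fwdDiff_iter_const_smul, IH]
    funext i
    simp only [Pi.smul_apply, smul_eq_mul, Nat.choose_succ_self_right]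
    rw [Nat.factorial_succ]
    push_cast
    ring

/-- The basic one-variable alternating sum. -/
noncomputable def bU (j m : ℕ) : ℂ :=
  ∑ i ∈ Finset.range (j + 1), (-1 : ℂ) ^ (j - i) * ((j.choose i : ℂ)) * (i : ℂ) ^ m

private lemma bU_eq (j m : ℕ) : bU j m = (fwdDiff 1)^[j] (bfm m) 0 := by
  rw [fwdDiff_iter_eq_sum_shift]
  refine Finset.sum_congr rfl fun i _ => ?_
  simp only [bfm, smul_eq_mul, zero_add]
  push_cast
  ring_nf
  norm_num [mul_comm, mul_assoc, mul_left_comm]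

private lemma bU_eq_zero {j m : ℕ} (h : m < j) : bU j m = 0 := by
  rw [bU_eq, bfm_fwdDiff_iter_eq_zero m j h]; rfl

private lemma bU_self (j : ℕ) : bU j j = (j.factorial : ℂ) := by
  rw [bU_eq, bfm_fwdDiff_iter_self]

section Key

/-- helper: sum over univ of a finsupp exponent -/
private lemma finsupp_sum_univ {N : ℕ} (m : Fin N →₀ ℕ) :
    (m.sum fun _ e => e) = ∑ k, m k :=
  Finsupp.sum_fintype _ _ fun _ => rfl

/-- Key lemma: a polynomial of total degree at most `d` vanishing at all lattice
points of the solid simplex `∑ i ≤ d` is zero. -/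
private lemma vanish_simplex_eq_zero {N d : ℕ} (q : MvPolynomial (Fin N) ℂ)
    (hdeg : q.totalDegree ≤ d)
    (h : ∀ i : Fin N → ℕ, (∑ k, i k) ≤ d → eval (fun k => (i k : ℂ)) q = 0) :
    q = 0 := by
  by_contra hq
  obtain ⟨μ, hμs, hμd⟩ :=
    q.support.exists_mem_eq_sup (support_nonempty.mpr hq) (fun s => s.sum fun _ e => e)
  -- hμd : q.totalDegree = μ.sum fun _ e => e  (totalDegree is this sup)
  have hμd' : q.totalDegree = μ.sum fun _ e => e := hμd
  have hμdeg : (∑ k, μ k) = q.totalDegree := by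
    rw [hμd', finsupp_sum_univ]
  set S : ℂ := ∑ i ∈ Fintype.piFinset (fun k => Finset.range (μ k + 1)),
      (∏ k, ((-1 : ℂ) ^ (μ k - i k) * ((μ k).choose (i k) : ℂ))) *
        eval (fun k => (i k : ℂ)) q with hS
  have hS0 : S = 0 := by
    refine Finset.sum_eq_zero fun i hi => ?_
    have hi' : ∀ k, i k ≤ μ k := fun k =>
      Nat.lt_succ_iff.mp (Finset.mem_range.mp (Fintype.mem_piFinset.mp hi k))
    have : (∑ k, i k) ≤ d := by
      calc (∑ k, i k) ≤ ∑ k, μ k := Finset.sum_le_sum fun k _ => hi' k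
        _ = q.totalDegree := hμdeg
        _ ≤ d := hdeg
    rw [h i this, mul_zero]
  have hS1 : S = coeff μ q * ∏ k, ((μ k).factorial : ℂ) := by
    have expand : S = ∑ m ∈ q.support, coeff m q * ∏ k, bU (μ k) (m k) := by
      rw [hS]
      have : ∀ i : Fin N → ℕ,
          (∏ k, ((-1 : ℂ) ^ (μ k - i k) * ((μ k).choose (i k) : ℂ))) *
            eval (fun k => (i k : ℂ)) q
          = ∑ m ∈ q.support, coeff m q *
              ∏ k, ((-1 : ℂ) ^ (μ k - i k) * ((μ k).choose (i k) : ℂ) * (i k : ℂ) ^ (m k)) := by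
        intro i
        rw [eval_eq', Finset.mul_sum]
        refine Finset.sum_congr rfl fun m _ => ?_
        rw [show (∏ k, ((-1 : ℂ) ^ (μ k - i k) * ((μ k).choose (i k) : ℂ) * (i k : ℂ) ^ (m k)))
            = (∏ k, ((-1 : ℂ) ^ (μ k - i k) * ((μ k).choose (i k) : ℂ))) *
              ∏ k, (i k : ℂ) ^ (m k) from Finset.prod_mul_distrib]
        ring
      rw [Finset.sum_congr rfl fun i _ => this i, Finset.sum_comm]
      refine Finset.sum_congr rfl fun m _ => ?_
      have hps := Finset.prod_univ_sum (fun k => Finset.range (μ k + 1))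
        (fun k v => (-1 : ℂ) ^ (μ k - v) * ((μ k).choose v : ℂ) * (v : ℂ) ^ (m k))
      rw [← Finset.mul_sum, ← hps]
      exact congrArg _ (Finset.prod_congr rfl fun k _ => rfl)
    rw [expand]
    have hzero : ∀ m ∈ q.support, m ≠ μ → coeff m q * ∏ k, bU (μ k) (m k) = 0 := by
      intro m hm hne
      have hlt : ∃ k, m k < μ k := by
        by_contra hge
        push_neg at hge
        have hne' : ∃ k, μ k < m k := by
          by_contra hle
          push_neg at hle
          exact hne (Finsupp.ext fun k => le_antisymm (hle k) (hge k))
        obtain ⟨k0, hk0⟩ := hne'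
        have : (∑ k, μ k) < ∑ k, m k :=
          Finset.sum_lt_sum (fun k _ => hge k) ⟨k0, Finset.mem_univ k0, hk0⟩
        have hmle : (∑ k, m k) ≤ q.totalDegree := by
          rw [← finsupp_sum_univ]; exact le_totalDegree hm
        omega
      obtain ⟨k, hk⟩ := hlt
      rw [Finset.prod_eq_zero (Finset.mem_univ k) (bU_eq_zero hk), mul_zero]
    rw [Finset.sum_eq_single_of_mem μ hμs hzero]
    congr 1
    exact Finset.prod_congr rfl fun k _ => bU_self (μ k)
  have hcoeff : coeff μ q ≠ 0 := mem_support_iff.mp hμs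
  have hfact : (∏ k, ((μ k).factorial : ℂ)) ≠ 0 :=
    Finset.prod_ne_zero_iff.mpr fun k _ => Nat.cast_ne_zero.mpr (Nat.factorial_ne_zero _)
  rw [hS0] at hS1
  exact (mul_ne_zero hcoeff hfact) hS1.symm

private lemma aeval_eq_eval' {N : ℕ} (v : Fin N → ℂ) (r : MvPolynomial (Fin N) ℂ) :
    aeval v r = eval v r := by
  rw [aeval_def, Algebra.algebraMap_self]; rfl

private lemma eval_aeval' {N M : ℕ} (g : Fin M → ℂ) (f : Fin N → MvPolynomial (Fin M) ℂ)
    (p : MvPolynomial (Fin N) ℂ) :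
    eval g (aeval f p) = eval (fun j => eval g (f j)) p := by
  rw [← aeval_eq_eval' g, comp_aeval_apply]
  rw [aeval_eq_eval']
  exact congrArg (fun v => eval v p) (funext fun j => aeval_eq_eval' g (f j))

end Key

private lemma homog_support_sum {N d : ℕ} {p : MvPolynomial (Fin N) ℂ} (hp : p.IsHomogeneous d)
    {m : Fin N →₀ ℕ} (hm : m ∈ p.support) : (∑ k, m k) = d := by
  have h1 : (Finsupp.weight 1) m = d := hp (mem_support_iff.mp hm)
  change (Finsupp.weight fun _ => 1) m = d at h1
  rw [← Finsupp.degree_eq_weight_one] at h1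
  rw [← finsupp_sum_univ]
  exact h1

private lemma totalDegree_aeval_le' {N M d : ℕ} (p : MvPolynomial (Fin N) ℂ)
    (hp : p.IsHomogeneous d) (f : Fin N → MvPolynomial (Fin M) ℂ)
    (hf : ∀ j, (f j).totalDegree ≤ 1) :
    (aeval f p).totalDegree ≤ d := by
  rw [aeval_def, eval₂_eq']
  refine le_trans (totalDegree_finset_sum _ _) (Finset.sup_le fun m hm => ?_)
  calc (algebraMap ℂ (MvPolynomial (Fin M) ℂ) (coeff m p) * ∏ j, f j ^ m j).totalDegree
      ≤ (algebraMap ℂ (MvPolynomial (Fin M) ℂ) (coeff m p)).totalDegree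
          + (∏ j, f j ^ m j).totalDegree := totalDegree_mul _ _
    _ = (∏ j, f j ^ m j).totalDegree := by
        rw [show (algebraMap ℂ (MvPolynomial (Fin M) ℂ)) = (C : ℂ →+* _) from rfl,
          totalDegree_C, zero_add]
    _ ≤ ∑ j, (f j ^ m j).totalDegree := totalDegree_finset_prod _ _
    _ ≤ ∑ j, m j * 1 := Finset.sum_le_sum fun j _ =>
        le_trans (totalDegree_pow _ _) (Nat.mul_le_mul_left _ (hf j))
    _ = ∑ j, m j := by simp
    _ = d := homog_support_sum hp hm

private lemma eval_scale {N d : ℕ} {p : MvPolynomial (Fin N) ℂ} (hp : p.IsHomogeneous d)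
    (c : ℂ) (y : Fin N → ℂ) :
    eval (fun k => c * y k) p = c ^ d * eval y p := by
  rw [eval_eq', eval_eq', Finset.mul_sum]
  refine Finset.sum_congr rfl fun m hm => ?_
  have h1 : (∏ k, (c * y k) ^ m k) = c ^ d * ∏ k, y k ^ m k := by
    rw [show (∏ k, (c * y k) ^ m k) = (∏ k, c ^ m k) * ∏ k, y k ^ m k by
      rw [← Finset.prod_mul_distrib]; exact Finset.prod_congr rfl fun k _ => mul_pow .. ]
    rw [Finset.prod_pow_eq_pow_sum, homog_support_sum hp hm]
  rw [h1]; ring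

open MvPolynomial in
/-- Biermann's Theorem: a nonzero form of degree `d` in `n` variables does not
vanish at all lattice points `i` with `i₁ + ⋯ + i_n = d`. -/
theorem biermann (n d : ℕ) (p : MvPolynomial (Fin n) ℂ)
    (hp : p.IsHomogeneous d) (hp0 : p ≠ 0) :
    ∃ i : Fin n → ℕ, (∑ k, i k) = d ∧
      eval (fun k => (i k : ℂ)) p ≠ 0 := by
  by_contra hcon
  push_neg at hcon
  apply hp0
  rcases Nat.eq_zero_or_pos d with rfl | hd
  · exact vanish_simplex_eq_zero p hp.totalDegree_le
      (fun i hi => hcon i (Nat.le_zero.mp hi))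
  cases n with
  | zero =>
    exfalso
    have htd := hp.totalDegree hp0
    obtain ⟨c, rfl⟩ := C_surjective (Fin 0) p
    rw [totalDegree_C] at htd
    omega
  | succ m =>
    classical
    set f : Fin (m + 1) → MvPolynomial (Fin m) ℂ :=
      Fin.snoc (fun k => X k) (C (d : ℂ) - ∑ k, X k) with hf
    have hf_cast : ∀ k : Fin m, f k.castSucc = X k := fun k => Fin.snoc_castSucc _ _ _
    have hf_last : f (Fin.last m) = C (d : ℂ) - ∑ k, X k := Fin.snoc_last _ _
    have hdeg1 : ∀ j, (f j).totalDegree ≤ 1 := by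
      intro j
      refine Fin.lastCases ?_ ?_ j
      · rw [hf_last]
        refine le_trans (totalDegree_sub _ _) (max_le ?_ ?_)
        · rw [totalDegree_C]; omega
        · exact le_trans (totalDegree_finset_sum _ _)
            (Finset.sup_le fun k _ => le_of_eq (totalDegree_X k))
      · intro k
        rw [hf_cast k, totalDegree_X]
    have hq0 : aeval f p = 0 := by
      refine vanish_simplex_eq_zero (d := d) _ (totalDegree_aeval_le' p hp f hdeg1) ?_
      intro i hi
      rw [eval_aeval']
      set I : Fin (m + 1) → ℕ := Fin.snoc i (d - ∑ k, i k) with hI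
      have heq : (fun j => eval (fun k => (i k : ℂ)) (f j)) = fun j => (I j : ℂ) := by
        funext j
        refine Fin.lastCases ?_ ?_ j
        · rw [hf_last, map_sub, eval_C, map_sum]
          simp only [eval_X]
          rw [hI, Fin.snoc_last, Nat.cast_sub hi]
          push_cast
          ring
        · intro k
          rw [hf_cast k, eval_X, hI, Fin.snoc_castSucc]
      rw [heq]
      apply hcon
      rw [Fin.sum_univ_castSucc]
      simp only [hI, Fin.snoc_castSucc, Fin.snoc_last]
      omega
    have hv : ∀ y : Fin (m + 1) → ℂ, (∑ j, y j) = d → eval y p = 0 := by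
      intro y hy
      have h1 := eval_aeval' (fun k => y k.castSucc) f p
      rw [hq0, map_zero] at h1
      have heq : (fun j => eval (fun k : Fin m => y k.castSucc) (f j)) = y := by
        funext j
        refine Fin.lastCases ?_ ?_ j
        · rw [hf_last, map_sub, eval_C, map_sum]
          simp only [eval_X]
          have hsum : (∑ k : Fin m, y k.castSucc) + y (Fin.last m) = d := by
            rw [← Fin.sum_univ_castSucc]; exact hy
          linear_combination -hsum
        · intro k
          rw [hf_cast k, eval_X]
      rw [heq] at h1
      exact h1.symm
    have hall : ∀ y : Fin (m + 1) → ℂ, eval y (p * ∑ j, X j) = 0 := by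
      intro y
      rw [map_mul]
      by_cases h0 : (∑ j, y j) = 0
      · have hx : eval y (∑ j, (X j : MvPolynomial (Fin (m + 1)) ℂ)) = 0 := by
          rw [map_sum]; simpa using h0
        rw [hx, mul_zero]
      · have hc : ((d : ℂ) / ∑ j, y j) ≠ 0 :=
          div_ne_zero (Nat.cast_ne_zero.mpr (by omega)) h0
        have h1 : (∑ j, ((d : ℂ) / ∑ j', y j') * y j) = d := by
          rw [← Finset.mul_sum, div_mul_cancel₀ _ h0]
        have h2 := hv (fun j => ((d : ℂ) / ∑ j', y j') * y j) h1
        rw [eval_scale hp] at h2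
        rcases mul_eq_zero.mp h2 with h | h
        · exact absurd h (pow_ne_zero _ hc)
        · rw [h, zero_mul]
    have hmul : p * (∑ j, X j) = 0 := by
      apply MvPolynomial.funext
      intro x
      rw [map_zero]
      exact hall x
    rcases mul_eq_zero.mp hmul with h | h
    · exact h
    · exfalso
      have h1 := congrArg (MvPolynomial.eval fun _ : Fin (m + 1) => (1 : ℂ)) h
      rw [map_sum, map_zero] at h1
      simp only [eval_X, Finset.sum_const, Finset.card_univ, Fintype.card_fin,
        nsmul_eq_mul, mul_one] at h1
      exact_mod_cast h1
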